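/- arXiv:2011.00991 — 2 statements merged into one kernel-verified Lean document; each statement's English description precedes it below -/
import Mathlib

section
/- Let Q₁ be an N×N complex matrix (N ≥ 2) all of whose eigenvalues have nonnegative real part and which has 0 as an eigenvalue, and let p ≥ 0 be real. Let Q be the supra-Laplacian of the multiplex with two identical layers Q₂ = Q₁. Then the second smallest element of the multiset of real parts of the eigenvalues of Q equals min( Reλ₂(Q₁), 2p ), where Reλ₂(Q₁) is the second smallest element of the multiset of real parts of the eigenvalues of Q₁. In particular, a multiplex of two identical directed layers is never superdiffusive. -/
open Matrix Polynomial

/-- The second smallest element of a multiset of real numbers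
(the second entry of the multiset sorted in non-decreasing order). -/
noncomputable def secondSmallest (s : Multiset ℝ) : ℝ :=
  (s.sort (· ≤ ·)).getD 1 0

private lemma sort_eq_cons (u : Multiset ℝ) (m : ℝ) (hm : m ∈ u) (hmin : ∀ x ∈ u, m ≤ x) :
    u.sort (· ≤ ·) = m :: (u.erase m).sort (· ≤ ·) := by
  have hperm : List.Perm (u.sort (· ≤ ·)) (m :: (u.erase m).sort (· ≤ ·)) := by
    rw [← Multiset.coe_eq_coe]
    rw [← Multiset.cons_coe, Multiset.sort_eq, Multiset.sort_eq, Multiset.cons_erase hm]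
  have hs2 : List.Pairwise (· ≤ ·) (m :: (u.erase m).sort (· ≤ ·)) := by
    rw [List.pairwise_cons]
    exact ⟨fun b hb => hmin b (Multiset.mem_of_mem_erase
      ((Multiset.mem_sort _).mp hb)), Multiset.pairwise_sort _ _⟩
  exact List.Perm.eq_of_pairwise' (Multiset.pairwise_sort _ _) hs2 hperm

private lemma exists_min (u : Multiset ℝ) (hu : u ≠ 0) : ∃ m ∈ u, ∀ x ∈ u, m ≤ x := by
  have hs := Multiset.pairwise_sort u (· ≤ ·)
  have he := Multiset.sort_eq u (· ≤ ·)
  cases h : u.sort (· ≤ ·) with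
  | nil => rw [h] at he; simp at he; exact absurd he.symm hu
  | cons m t =>
    rw [h] at hs he
    rw [List.pairwise_cons] at hs
    refine ⟨m, ?_, ?_⟩
    · rw [← he]; simp
    · intro x hx
      rw [← he] at hx
      simp only [Multiset.mem_coe, List.mem_cons] at hx
      rcases hx with rfl | hx
      · exact le_refl x
      · exact hs.1 x hx

private lemma secondSmallest_eq (t : Multiset ℝ) (h0 : (0 : ℝ) ∈ t) (hpos : ∀ x ∈ t, 0 ≤ x)
    (m : ℝ) (hm : m ∈ t.erase 0) (hmin : ∀ x ∈ t.erase 0, m ≤ x) :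
    secondSmallest t = m := by
  unfold secondSmallest
  rw [sort_eq_cons t 0 h0 hpos, sort_eq_cons (t.erase 0) m hm hmin]
  rfl

private lemma det_fromBlocks_symm {n : Type*} [DecidableEq n] [Fintype n] {R : Type*}
    [CommRing R] (X Y : Matrix n n R) :
    (fromBlocks X Y Y X).det = (X + Y).det * (X - Y).det := by
  have h : fromBlocks X Y Y X =
      fromBlocks 1 0 1 1 * fromBlocks (X + Y) Y 0 (X - Y) * fromBlocks 1 0 (-1) 1 := by
    rw [Matrix.fromBlocks_multiply, Matrix.fromBlocks_multiply, Matrix.fromBlocks_inj]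
    refine ⟨?_, ?_, ?_, ?_⟩ <;> noncomm_ring
  rw [h, det_mul, det_mul, det_fromBlocks_zero₁₂, det_fromBlocks_zero₂₁,
    det_fromBlocks_zero₁₂, det_one]
  ring

private lemma charmatrix_add_smul_one {n : Type*} [DecidableEq n] [Fintype n]
    (A : Matrix n n ℂ) (c : ℂ) :
    charmatrix (A + c • 1) = charmatrix A - (C c) • 1 := by
  ext i j
  by_cases h : i = j
  · subst h
    simp [charmatrix_apply_eq, Matrix.add_apply, Matrix.smul_apply, Matrix.one_apply_eq]
    ring
  · simp [charmatrix_apply_ne _ _ _ h, Matrix.add_apply, Matrix.smul_apply,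
      Matrix.one_apply_ne h]

private lemma map_smul_one_C {n : Type*} [DecidableEq n] [Fintype n] (c : ℂ) :
    ((c • (1 : Matrix n n ℂ)).map C) = (C c) • (1 : Matrix n n ℂ[X]) := by
  ext i j
  by_cases h : i = j
  · subst h; simp [Matrix.one_apply_eq]
  · simp [Matrix.one_apply_ne h]

private lemma charpoly_add_smul_one {n : Type*} [DecidableEq n] [Fintype n]
    (A : Matrix n n ℂ) (c : ℂ) :
    (A + c • (1 : Matrix n n ℂ)).charpoly = A.charpoly.comp (X - C c) := by
  have hmap : (charmatrix A).map ⇑(Polynomial.aeval (X - C c) : ℂ[X] →ₐ[ℂ] ℂ[X])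
      = charmatrix (A + c • 1) := by
    ext i j
    by_cases h : i = j
    · subst h
      simp [charmatrix_apply_eq, Matrix.add_apply, Matrix.smul_apply, Matrix.one_apply_eq]
      ring
    · simp [charmatrix_apply_ne _ _ _ h, Matrix.add_apply, Matrix.smul_apply,
        Matrix.one_apply_ne h]
  rw [Matrix.charpoly, Matrix.charpoly, ← hmap, comp_eq_aeval]
  exact (AlgHom.map_det (Polynomial.aeval (X - C c)) (charmatrix A)).symm

private lemma roots_comp_shift (P : Polynomial ℂ) (hP : P.Monic) (c : ℂ) :
    (P.comp (X - C c)).roots = P.roots.map (· + c) := by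
  conv_lhs =>
    rw [(IsAlgClosed.splits P).eq_prod_roots_of_monic hP]
  rw [comp_eq_aeval, map_multiset_prod, Multiset.map_map]
  have h : ∀ a : ℂ, (Polynomial.aeval (X - C c)) (X - C a) = X - C (a + c) := by
    intro a
    simp [map_sub, Polynomial.aeval_X, Polynomial.aeval_C]
    ring
  have : ((P.roots.map fun a => (Polynomial.aeval (X - C c)) (X - C a))).prod
      = ((P.roots.map (· + c)).map fun a => X - C a).prod := by
    rw [Multiset.map_map]
    congr 1
    exact Multiset.map_congr rfl fun a _ => h a
  rw [show (⇑(Polynomial.aeval (X - C c) : ℂ[X] →ₐ[ℂ] ℂ[X]) ∘ fun a => X - C a)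
      = fun a : ℂ => (Polynomial.aeval (X - C c)) (X - C a) from rfl, this,
    Polynomial.roots_multiset_prod_X_sub_C]

/-- For a multiplex made of two identical (possibly directed) layers `Q₂ = Q₁`, where all
eigenvalues of `Q₁` have nonnegative real part and `0` is an eigenvalue of `Q₁`, the second
smallest real part of the eigenvalues of the supra-Laplacian equals
`min(Reλ₂(Q₁), 2p)`: a multiplex of two identical layers is never superdiffusive. -/
theorem identical_layers_never_superdiffusive
    (N : ℕ) (hN : 2 ≤ N) (Q1 : Matrix (Fin N) (Fin N) ℂ)
    (hre : ∀ μ ∈ Q1.charpoly.roots, 0 ≤ μ.re)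
    (h0 : (0 : ℂ) ∈ Q1.charpoly.roots)
    (p : ℝ) (hp : 0 ≤ p) :
    secondSmallest
        (((Matrix.fromBlocks (Q1 + (p : ℂ) • 1) (-((p : ℂ) • 1)) (-((p : ℂ) • 1))
            (Q1 + (p : ℂ) • 1)).charpoly.roots).map Complex.re) =
      min (secondSmallest ((Q1.charpoly.roots).map Complex.re)) (2 * p) := by
  classical
  set c : ℂ := ((2 * p : ℝ) : ℂ) with hc
  -- Step 1: the characteristic polynomial factors
  have hQ : (Matrix.fromBlocks (Q1 + (p : ℂ) • 1) (-((p : ℂ) • 1)) (-((p : ℂ) • 1))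
      (Q1 + (p : ℂ) • 1)).charpoly = Q1.charpoly * (Q1 + c • 1).charpoly := by
    have hY : -((-((p : ℂ) • (1 : Matrix (Fin N) (Fin N) ℂ))).map ⇑C)
        = (C (p : ℂ)) • (1 : Matrix (Fin N) (Fin N) ℂ[X]) := by
      ext i j
      by_cases h : i = j
      · subst h; simp [Matrix.one_apply_eq]
      · simp [Matrix.one_apply_ne h]
    rw [Matrix.charpoly, charmatrix_fromBlocks, hY,
      det_fromBlocks_symm, charmatrix_add_smul_one]
    have h1 : charmatrix Q1 - (C (p : ℂ)) • 1 + (C (p : ℂ)) • 1 = charmatrix Q1 := by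
      abel
    have h2 : charmatrix Q1 - (C (p : ℂ)) • 1 - (C (p : ℂ)) • 1 = charmatrix Q1 - (C c) • 1 := by
      rw [sub_sub, ← add_smul, ← map_add]
      congr 2
      push_cast [hc]
      ring
    rw [h1, h2, ← charmatrix_add_smul_one Q1 c]
    rfl
  -- Step 2: roots of the product
  have hmonic := Q1.charpoly_monic
  have hmonic2 := (Q1 + c • (1 : Matrix (Fin N) (Fin N) ℂ)).charpoly_monic
  have hroots : (Matrix.fromBlocks (Q1 + (p : ℂ) • 1) (-((p : ℂ) • 1)) (-((p : ℂ) • 1))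
      (Q1 + (p : ℂ) • 1)).charpoly.roots = Q1.charpoly.roots + Q1.charpoly.roots.map (· + c) := by
    rw [hQ, Polynomial.roots_mul (mul_ne_zero hmonic.ne_zero hmonic2.ne_zero),
      charpoly_add_smul_one, roots_comp_shift _ hmonic]
  rw [hroots]
  set s : Multiset ℝ := Q1.charpoly.roots.map Complex.re with hs
  have hmapre : (Q1.charpoly.roots.map (· + c)).map Complex.re = s.map (· + 2 * p) := by
    rw [hs, Multiset.map_map, Multiset.map_map]
    refine Multiset.map_congr rfl fun a _ => ?_
    simp [hc]
  rw [Multiset.map_add, hmapre]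
  -- facts about s
  have h0s : (0 : ℝ) ∈ s := by
    rw [hs]
    exact Multiset.mem_map.mpr ⟨0, h0, by simp⟩
  have hposs : ∀ x ∈ s, 0 ≤ x := by
    intro x hx
    rw [hs] at hx
    obtain ⟨μ, hμ, rfl⟩ := Multiset.mem_map.mp hx
    exact hre μ hμ
  have hcard : Multiset.card s = N := by
    rw [hs, Multiset.card_map,
      (Polynomial.splits_iff_card_roots).mp (IsAlgClosed.splits Q1.charpoly)]
    simp
  have herase_ne : s.erase 0 ≠ 0 := by
    intro h
    have h2 := Multiset.card_erase_of_mem h0s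
    rw [h] at h2
    simp [hcard, Nat.pred_eq_sub_one] at h2
    omega
  obtain ⟨m, hm, hmmin⟩ := exists_min _ herase_ne
  rw [secondSmallest_eq s h0s hposs m hm hmmin]
  -- the combined multiset
  have herase : (s + s.map (· + 2 * p)).erase 0 = s.erase 0 + s.map (· + 2 * p) :=
    Multiset.erase_add_left_pos _ h0s
  have hbound2 : ∀ x ∈ s.map (· + 2 * p), 2 * p ≤ x := by
    intro x hx
    obtain ⟨y, hy, rfl⟩ := Multiset.mem_map.mp hx
    linarith [hposs y hy]
  apply secondSmallest_eq
  · exact Multiset.mem_add.mpr (Or.inl h0s)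
  · intro x hx
    rcases Multiset.mem_add.mp hx with h | h
    · exact hposs x h
    · linarith [hbound2 x h, hp]
  · rw [herase]
    rcases le_total m (2 * p) with hle | hle
    · rw [min_eq_left hle]
      exact Multiset.mem_add.mpr (Or.inl hm)
    · rw [min_eq_right hle]
      exact Multiset.mem_add.mpr (Or.inr (Multiset.mem_map.mpr ⟨0, h0s, by ring⟩))
  · rw [herase]
    intro x hx
    rcases Multiset.mem_add.mp hx with h | h
    · exact le_trans (min_le_left _ _) (hmmin x h)
    · exact le_trans (min_le_right _ _) (hbound2 x h)
end

section
/- Let X be an n×n complex matrix (n ≥ 2) such that 0 is an eigenvalue of X and the Hermitian part Re X = (X + Xᴴ)/2 is positive semidefinite with smallest eigenvalue 0. Then the second smallest element of the multiset of real parts of the eigenvalues of X is greater than or equal to the second smallest eigenvalue of Re X; i.e., Reλ₂(X) ≥ λ₂(Re X). -/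
open Matrix
open scoped ComplexOrder

section SSauxLemmas
open Polynomial

lemma SSaux.secondSmallest_le {s : Multiset ℝ} {c : ℝ}
    (h : 2 ≤ (s.filter (fun x => x ≤ c)).card) : secondSmallest s ≤ c := by
  classical
  have hperm : ((s.sort (· ≤ ·) : List ℝ) : Multiset ℝ) = s := Multiset.sort_eq s _
  have hsorted : (s.sort (· ≤ ·)).Pairwise (· ≤ ·) := Multiset.pairwise_sort s _
  unfold secondSmallest
  rcases hl : s.sort (· ≤ ·) with _ | ⟨a, _ | ⟨b, t⟩⟩
  · rw [hl] at hperm; rw [← hperm] at h; simp at h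
  · rw [hl] at hperm; rw [← hperm] at h
    simp only [Multiset.filter_coe, Multiset.coe_card] at h
    have := List.length_filter_le (fun x => decide (x ≤ c)) [a]
    simp at this h; omega
  · rw [hl] at hperm hsorted
    simp only [List.getD_cons_succ, List.getD_cons_zero]
    by_contra hbc
    push_neg at hbc
    rw [← hperm] at h
    have hb2 : ∀ x ∈ t, b ≤ x := (List.pairwise_cons.mp (List.pairwise_cons.mp hsorted).2).1
    have ht0 : Multiset.filter (fun x => x ≤ c) (↑t : Multiset ℝ) = 0 :=
      Multiset.filter_eq_nil.mpr (fun x hx => by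
        have := hb2 x (by exact_mod_cast hx); push_neg; linarith)
    rw [← Multiset.cons_coe, ← Multiset.cons_coe, Multiset.filter_cons, Multiset.filter_cons, ht0] at h
    rw [if_neg (show ¬ b ≤ c from not_le.mpr hbc)] at h
    split_ifs at h <;> simp_all

lemma SSaux.le_secondSmallest {s : Multiset ℝ} {c : ℝ}
    (hcard : 2 ≤ Multiset.card s) (h : (s.filter (fun x => x < c)).card ≤ 1) :
    c ≤ secondSmallest s := by
  classical
  have hperm : ((s.sort (· ≤ ·) : List ℝ) : Multiset ℝ) = s := Multiset.sort_eq s _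
  have hsorted : (s.sort (· ≤ ·)).Pairwise (· ≤ ·) := Multiset.pairwise_sort s _
  unfold secondSmallest
  rcases hl : s.sort (· ≤ ·) with _ | ⟨a, _ | ⟨b, t⟩⟩
  · rw [hl] at hperm; rw [← hperm] at hcard; simp at hcard
  · rw [hl] at hperm; rw [← hperm] at hcard; simp at hcard
  · rw [hl] at hperm hsorted
    simp only [List.getD_cons_succ, List.getD_cons_zero]
    by_contra hbc
    push_neg at hbc
    have hab : a ≤ b := (List.pairwise_cons.mp hsorted).1 b (by simp)
    rw [← hperm, ← Multiset.cons_coe, ← Multiset.cons_coe, Multiset.filter_cons,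
      Multiset.filter_cons, if_pos (by linarith), if_pos (by linarith)] at h
    simp at h


lemma SSaux.charpoly_conj_aux {n : Type*} [DecidableEq n] [Fintype n]
    (V U A : Matrix n n ℂ) (h : V * U = 1) :
    (V * A * U).charpoly = A.charpoly := by
  have hmul : (V.map (C : ℂ →+* ℂ[X])) * (U.map C) = 1 := by
    rw [← Matrix.map_mul, h, Matrix.map_one _ (map_zero C) (map_one C)]
  have key : charmatrix (V * A * U) = V.map C * charmatrix A * U.map C := by
    rw [charmatrix, charmatrix]
    simp only [RingHom.mapMatrix_apply]
    rw [Matrix.mul_sub, Matrix.sub_mul]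
    congr 1
    · rw [scalar_apply, ← Matrix.smul_one_eq_diagonal, Matrix.mul_smul, Matrix.smul_mul,
        mul_one, hmul]
    · rw [← Matrix.map_mul, ← Matrix.map_mul]
  unfold Matrix.charpoly
  rw [key, Matrix.det_mul, Matrix.det_mul]
  have : (V.map (C : ℂ →+* ℂ[X])).det * (U.map C).det = 1 := by
    rw [← Matrix.det_mul, hmul, Matrix.det_one]
  calc (V.map (C : ℂ →+* ℂ[X])).det * (charmatrix A).det * (U.map C).det
      = (charmatrix A).det * ((V.map (C : ℂ →+* ℂ[X])).det * (U.map C).det) := by ring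
    _ = (charmatrix A).det := by rw [this, mul_one]

lemma SSaux.charpoly_diagonal {n : Type*} [DecidableEq n] [Fintype n] (d : n → ℂ) :
    (Matrix.diagonal d).charpoly = ∏ i, (X - C (d i)) := by
  have hcm : charmatrix (Matrix.diagonal d) = Matrix.diagonal (fun i => (X : ℂ[X]) - C (d i)) := by
    ext i j
    by_cases hij : i = j
    · subst hij; simp
    · rw [charmatrix_apply_ne _ _ _ hij, Matrix.diagonal_apply_ne _ hij,
        Matrix.diagonal_apply_ne _ hij, map_zero, neg_zero]
  unfold Matrix.charpoly
  rw [hcm, Matrix.det_diagonal]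

lemma SSaux.roots_charpoly_hermitian {n : Type*} [DecidableEq n] [Fintype n]
    {A : Matrix n n ℂ} (hA : A.IsHermitian) :
    A.charpoly.roots = Finset.univ.val.map (fun i => ((hA.eigenvalues i : ℝ) : ℂ)) := by
  have h1 : A.charpoly
      = (Matrix.diagonal ((fun i => ((hA.eigenvalues i : ℝ) : ℂ)))).charpoly := by
    conv_lhs => rw [hA.spectral_theorem]
    exact SSaux.charpoly_conj_aux _ _ _
      (Matrix.mem_unitaryGroup_iff.mp (hA.eigenvectorUnitary).2)
  rw [h1, SSaux.charpoly_diagonal]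
  rw [Finset.prod_eq_multiset_prod]
  have h2 : Multiset.map (fun i => X - C ((hA.eigenvalues i : ℝ) : ℂ)) Finset.univ.val
      = Multiset.map (fun a : ℂ => X - C a)
          (Finset.univ.val.map (fun i => ((hA.eigenvalues i : ℝ) : ℂ))) := by
    rw [Multiset.map_map]; rfl
  rw [h2, Polynomial.roots_multiset_prod_X_sub_C]

lemma SSaux.charpoly_zero_row_col {m : ℕ} (B : Matrix (Fin (m+1)) (Fin (m+1)) ℂ)
    (hc : ∀ i, B i 0 = 0) (hr : ∀ j, B 0 j = 0) :
    B.charpoly = X * (B.submatrix Fin.succ Fin.succ).charpoly := by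
  have hsub : (charmatrix B).submatrix Fin.succ Fin.succ
      = charmatrix (B.submatrix Fin.succ Fin.succ) := by
    ext i j
    by_cases hij : i = j
    · subst hij; simp
    · have hsij : Fin.succ i ≠ Fin.succ j := fun hh => hij (Fin.succ_injective _ hh)
      rw [Matrix.submatrix_apply, charmatrix_apply_ne _ _ _ hsij,
        charmatrix_apply_ne _ _ _ hij, Matrix.submatrix_apply]
  unfold Matrix.charpoly
  rw [Matrix.det_succ_column_zero]
  rw [Finset.sum_eq_single 0]
  · rw [charmatrix_apply_eq, hc 0, map_zero, sub_zero, Fin.val_zero, pow_zero, one_mul,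
      Fin.succAbove_zero, hsub]
  · intro i _ hi
    have : charmatrix B i 0 = 0 := by
      rw [charmatrix_apply_ne _ _ _ hi, hc i, map_zero, neg_zero]
    rw [this, mul_zero, zero_mul]
  · intro hmem; exact absurd (Finset.mem_univ 0) hmem

lemma SSaux.exists_eigenvector_of_mem_roots {k : ℕ} (A : Matrix (Fin k) (Fin k) ℂ) {ρ : ℂ}
    (h : ρ ∈ A.charpoly.roots) : ∃ w : Fin k → ℂ, w ≠ 0 ∧ A *ᵥ w = ρ • w := by
  have hroot : A.charpoly.IsRoot ρ := (Polynomial.mem_roots'.mp h).2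
  have hmap : (charmatrix A).map (Polynomial.evalRingHom ρ) = Matrix.diagonal (fun _ => ρ) - A := by
    ext i j
    by_cases hij : i = j
    · subst hij
      simp [Matrix.sub_apply]
    · rw [Matrix.map_apply, charmatrix_apply_ne _ _ _ hij, Matrix.sub_apply,
        Matrix.diagonal_apply_ne _ hij]
      simp
  have hdet : (Matrix.diagonal (fun _ : Fin k => ρ) - A).det = 0 := by
    rw [← hmap, ← RingHom.mapMatrix_apply, ← RingHom.map_det]
    simpa [Matrix.charpoly] using hroot
  obtain ⟨w, hw0, hw⟩ := (Matrix.exists_mulVec_eq_zero_iff).mpr hdet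
  refine ⟨w, hw0, ?_⟩
  have := hw
  rw [Matrix.sub_mulVec] at this
  have hd : Matrix.diagonal (fun _ : Fin k => ρ) *ᵥ w = ρ • w := by
    funext i; rw [Matrix.mulVec_diagonal]; rfl
  rw [hd] at this
  exact (sub_eq_zero.mp this).symm
-- main theorem part; will be concatenated after aux1+aux2

end SSauxLemmas

set_option maxRecDepth 8000

/-- If `0` is an eigenvalue of `X` and the Hermitian part `Re X = (X + Xᴴ)/2` is positive
semidefinite with smallest eigenvalue `0`, then the second smallest real part of the
eigenvalues of `X` is at least the second smallest eigenvalue of `Re X` (the eigenvalues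
of the Hermitian matrix `Re X` are real, hence recovered as the real parts of its
characteristic roots). -/
theorem reLambda2_ge_lambda2_hermitianPart
    (n : ℕ) (hn : 2 ≤ n) (X : Matrix (Fin n) (Fin n) ℂ)
    (h0 : (0 : ℂ) ∈ X.charpoly.roots)
    (hpsd : ((1 / 2 : ℂ) • (X + Xᴴ)).PosSemidef)
    (h0' : (0 : ℂ) ∈ ((1 / 2 : ℂ) • (X + Xᴴ)).charpoly.roots) :
    secondSmallest ((X.charpoly.roots).map Complex.re) ≥
      secondSmallest ((((1 / 2 : ℂ) • (X + Xᴴ)).charpoly.roots).map Complex.re) := by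
  classical
  obtain ⟨m, rfl⟩ : ∃ m, n = m + 1 := ⟨n - 1, by omega⟩
  have hm : 1 ≤ m := by omega
  set H : Matrix (Fin (m+1)) (Fin (m+1)) ℂ := (1/2 : ℂ) • (X + Xᴴ) with hH
  obtain ⟨v, hv0, hv⟩ := SSaux.exists_eigenvector_of_mem_roots X h0
  rw [zero_smul] at hv
  have hHv : H *ᵥ v = 0 := by
    apply (hpsd.dotProduct_mulVec_zero_iff v).mp
    have h1 : H *ᵥ v = (1/2 : ℂ) • (Xᴴ *ᵥ v) := by
      rw [hH, Matrix.smul_mulVec, Matrix.add_mulVec, hv, zero_add]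
    rw [h1, dotProduct_smul]
    have h2 : star v ⬝ᵥ (Xᴴ *ᵥ v) = 0 := by
      rw [Matrix.dotProduct_mulVec, ← Matrix.conjTranspose_conjTranspose X,
        ← Matrix.star_mulVec, Matrix.conjTranspose_conjTranspose, hv]
      simp
    rw [h2, smul_zero]
  have hXHv : Xᴴ *ᵥ v = 0 := by
    have h3 : (X + Xᴴ) *ᵥ v = 0 := by
      have h4 := hHv
      rw [hH, Matrix.smul_mulVec] at h4
      simpa using (smul_eq_zero.mp h4).resolve_left (by norm_num)
    rw [Matrix.add_mulVec, hv, zero_add] at h3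
    exact h3
  -- construct a unitary whose 0-th column is proportional to v
  set w0 : EuclideanSpace ℂ (Fin (m+1)) := (WithLp.equiv 2 _).symm v with hw0def
  have hw0i : ∀ i, w0 i = v i := fun _ => rfl
  have hw00 : w0 ≠ 0 := fun hc => hv0 (funext fun i => by rw [← hw0i i, hc]; rfl)
  set r : ℝ := ‖w0‖⁻¹ with hr
  have hrpos : 0 < r := inv_pos.mpr (norm_pos_iff.mpr hw00)
  set v0 : EuclideanSpace ℂ (Fin (m+1)) := (r : ℂ) • w0 with hv0def
  have hv0norm : ‖v0‖ = 1 := by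
    rw [hv0def, norm_smul, Complex.norm_real, Real.norm_eq_abs, abs_of_pos hrpos, hr]
    exact inv_mul_cancel₀ (norm_ne_zero_iff.mpr hw00)
  have hv0i : ∀ i, v0 i = (r : ℂ) * v i := fun i => by
    rw [hv0def]; simp [hw0i i]
  have horth : Orthonormal ℂ (({0} : Set (Fin (m+1))).restrict (fun _ => v0)) := by
    rw [orthonormal_iff_ite]
    rintro ⟨i, hi⟩ ⟨j, hj⟩
    have hij : (⟨i, hi⟩ : ({0} : Set (Fin (m+1)))) = ⟨j, hj⟩ := by
      apply Subtype.ext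
      rw [Set.mem_singleton_iff] at hi hj; exact hi.trans hj.symm
    rw [if_pos hij, hij]
    rw [@inner_self_eq_norm_sq_to_K ℂ,
      show ‖({0} : Set (Fin (m+1))).restrict (fun _ => v0) ⟨j, hj⟩‖ = ‖v0‖ from rfl, hv0norm]
    norm_num
  obtain ⟨b, hb⟩ := horth.exists_orthonormalBasis_extension_of_card_eq (by simp)
  have hb0 : b 0 = v0 := hb 0 rfl
  set U : Matrix (Fin (m+1)) (Fin (m+1)) ℂ := Matrix.of (fun i j => b j i) with hU
  have hUU : Uᴴ * U = 1 := by
    ext j k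
    have hinner := orthonormal_iff_ite.mp b.orthonormal j k
    rw [PiLp.inner_apply] at hinner
    simp only [RCLike.inner_apply] at hinner
    simp only [Matrix.mul_apply, Matrix.conjTranspose_apply, hU, Matrix.of_apply,
      Matrix.one_apply]
    rw [← hinner]
    exact Finset.sum_congr rfl fun _ _ => mul_comm _ _
  have hUcol : (fun k => U k 0) = (r : ℂ) • v := by
    funext k
    simp only [hU, Matrix.of_apply, hb0]
    rw [hv0i k]; rfl
  have key : ∀ M : Matrix (Fin (m+1)) (Fin (m+1)) ℂ, M *ᵥ v = 0 → Mᴴ *ᵥ v = 0 →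
      (∀ i, (Uᴴ * M * U) i 0 = 0) ∧ (∀ j, (Uᴴ * M * U) 0 j = 0) := by
    intro M hM hMH
    constructor
    · intro i
      have h1 : (Uᴴ * M * U) i 0 = ((Uᴴ * M) *ᵥ (fun k => U k 0)) i := by
        simp [Matrix.mul_apply, Matrix.mulVec, dotProduct]
      rw [h1, hUcol, Matrix.mulVec_smul, ← Matrix.mulVec_mulVec, hM, Matrix.mulVec_zero,
        smul_zero]
      rfl
    · intro j
      have h1 : (Uᴴ * M * U) 0 j = ((star (fun k => U k 0)) ᵥ* (M * U)) j := by
        rw [Matrix.mul_assoc]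
        simp [Matrix.mul_apply, Matrix.vecMul, dotProduct, Matrix.conjTranspose_apply]
      have h2 : star ((r:ℂ) • v) = (r:ℂ) • star v := by
        rw [star_smul, Complex.star_def, Complex.conj_ofReal]
      have h3 : star v ᵥ* M = 0 := by
        have h5 := Matrix.star_mulVec (Mᴴ) v
        rw [hMH, Matrix.conjTranspose_conjTranspose] at h5
        simpa using h5.symm
      rw [h1, hUcol, h2, Matrix.smul_vecMul, ← Matrix.vecMul_vecMul, h3,
        Matrix.zero_vecMul, smul_zero]
      rfl
  obtain ⟨hBcol, hBrow⟩ := key X hv hXHv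
  have hHherm : Hᴴ = H := hpsd.isHermitian
  obtain ⟨hKcol, hKrow⟩ := key H hHv (by rw [hHherm]; exact hHv)
  set B : Matrix (Fin (m+1)) (Fin (m+1)) ℂ := Uᴴ * X * U with hBdef
  set K : Matrix (Fin (m+1)) (Fin (m+1)) ℂ := Uᴴ * H * U with hKdef
  set B' : Matrix (Fin m) (Fin m) ℂ := B.submatrix Fin.succ Fin.succ with hB'
  set K' : Matrix (Fin m) (Fin m) ℂ := K.submatrix Fin.succ Fin.succ with hK'
  have hXc : X.charpoly = Polynomial.X * B'.charpoly := by
    rw [← SSaux.charpoly_conj_aux Uᴴ U X hUU]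
    exact SSaux.charpoly_zero_row_col _ hBcol hBrow
  have hHc : H.charpoly = Polynomial.X * K'.charpoly := by
    rw [← SSaux.charpoly_conj_aux Uᴴ U H hUU]
    exact SSaux.charpoly_zero_row_col _ hKcol hKrow
  have hKpsd : K.PosSemidef := hpsd.conjTranspose_mul_mul_same U
  have hK'psd : K'.PosSemidef := hKpsd.submatrix Fin.succ
  set μ : Fin m → ℝ := hK'psd.isHermitian.eigenvalues with hμ
  obtain ⟨k0, -, hk0⟩ := Finset.exists_min_image Finset.univ μ ⟨⟨0, by omega⟩, Finset.mem_univ _⟩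
  set c : ℝ := μ k0 with hc
  have hc0 : 0 ≤ c := hK'psd.eigenvalues_nonneg k0
  -- K' is the hermitian part of B'
  have hBH : Bᴴ = Uᴴ * Xᴴ * U := by
    rw [hBdef]; simp [Matrix.conjTranspose_mul, Matrix.mul_assoc]
  have hKB : K' = (1/2 : ℂ) • (B' + B'ᴴ) := by
    have h4 : K = (1/2 : ℂ) • (B + Bᴴ) := by
      rw [hKdef, hH, hBH, hBdef, Matrix.mul_smul, Matrix.smul_mul]
      congr 1
      rw [Matrix.mul_add, Matrix.add_mul]
    rw [hK', hB', h4]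
    ext i j
    simp [Matrix.submatrix_apply, Matrix.conjTranspose_apply, Matrix.add_apply]
    ring
  -- K' - c • 1 is PSD
  have hcsub : (K' - (c : ℂ) • 1).PosSemidef := by
    have hspec := hK'psd.isHermitian.spectral_theorem
    set V : Matrix (Fin m) (Fin m) ℂ :=
      (hK'psd.isHermitian.eigenvectorUnitary : Matrix (Fin m) (Fin m) ℂ) with hV
    have hVV : V * star V = 1 :=
      Matrix.mem_unitaryGroup_iff.mp hK'psd.isHermitian.eigenvectorUnitary.2
    have h5 : K' - (c:ℂ) • 1
        = V * (Matrix.diagonal (fun i => ((μ i - c : ℝ) : ℂ))) * star V := by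
      have h6 : ((c:ℂ) • (1 : Matrix (Fin m) (Fin m) ℂ)) = V * ((c:ℂ) • 1) * star V := by
        rw [Matrix.mul_smul, mul_one, Matrix.smul_mul, hVV]
      rw [h6]
      conv_lhs => rw [hspec, Unitary.conjStarAlgAut_apply]
      rw [← Matrix.sub_mul, ← Matrix.mul_sub]
      congr 2
      rw [Matrix.smul_one_eq_diagonal, Matrix.diagonal_sub]
      congr 1
      funext i
      push_cast
      rfl
    rw [h5, Matrix.star_eq_conjTranspose]
    refine Matrix.PosSemidef.mul_mul_conjTranspose_same ?_ V
    refine Matrix.posSemidef_diagonal_iff.mpr (fun i => ?_)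
    rw [Complex.zero_le_real]
    have := hk0 i (Finset.mem_univ i)
    linarith
  -- Bendixson-type bound for the eigenvalues of B'
  have hbend : ∀ ρ : ℂ, ρ ∈ B'.charpoly.roots → c ≤ ρ.re := by
    intro ρ hρ
    obtain ⟨w, hw0, hw⟩ := SSaux.exists_eigenvector_of_mem_roots B' hρ
    set S : ℝ := ∑ i, Complex.normSq (w i) with hS
    have hSpos : 0 < S := by
      obtain ⟨i, hi⟩ := Function.ne_iff.mp hw0
      exact Finset.sum_pos' (fun j _ => Complex.normSq_nonneg _)
        ⟨i, Finset.mem_univ i, Complex.normSq_pos.mpr (by simpa using hi)⟩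
    have hs : star w ⬝ᵥ w = (S : ℂ) := by
      rw [hS]
      push_cast
      simp [dotProduct, Pi.star_apply, Complex.star_def,
        Complex.normSq_eq_conj_mul_self]
    have ht1 : star w ⬝ᵥ (B' *ᵥ w) = ρ * (S : ℂ) := by
      rw [hw, dotProduct_smul, hs]; rfl
    have ht2 : star w ⬝ᵥ (B'ᴴ *ᵥ w) = (starRingEnd ℂ) ρ * (S : ℂ) := by
      rw [Matrix.dotProduct_mulVec, ← Matrix.star_mulVec, hw, star_smul,
        smul_dotProduct, hs]
      rfl
    have hKq : star w ⬝ᵥ (K' *ᵥ w) = ((ρ.re * S : ℝ) : ℂ) := by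
      rw [hKB, Matrix.smul_mulVec, dotProduct_smul, Matrix.add_mulVec,
        dotProduct_add, ht1, ht2, smul_eq_mul]
      rw [show ρ * (S:ℂ) + (starRingEnd ℂ) ρ * (S:ℂ) = (ρ + (starRingEnd ℂ) ρ) * (S:ℂ) by ring,
        Complex.add_conj]
      push_cast
      ring
    have hineq := hcsub.dotProduct_mulVec_nonneg w
    rw [Matrix.sub_mulVec, dotProduct_sub, hKq, Matrix.smul_mulVec,
      Matrix.one_mulVec, dotProduct_smul, hs, smul_eq_mul] at hineq
    have h7 : ((c * S : ℝ) : ℂ) ≤ ((ρ.re * S : ℝ) : ℂ) := by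
      rw [← sub_nonneg]
      have h8 : ((ρ.re * S : ℝ) : ℂ) - ((c * S : ℝ) : ℂ)
          = (((ρ.re * S : ℝ) : ℂ) - (c : ℂ) * (S : ℂ)) := by push_cast; ring
      rw [h8]
      exact hineq
    have hfin : c * S ≤ ρ.re * S := by exact_mod_cast h7
    exact le_of_mul_le_mul_right hfin hSpos
  -- roots of the two charpolys
  have hXroots : X.charpoly.roots = 0 ::ₘ B'.charpoly.roots := by
    rw [hXc, Polynomial.roots_mul (mul_ne_zero Polynomial.X_ne_zero B'.charpoly_monic.ne_zero),
      Polynomial.roots_X, Multiset.singleton_add]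
  have hHroots : H.charpoly.roots = 0 ::ₘ K'.charpoly.roots := by
    rw [hHc, Polynomial.roots_mul (mul_ne_zero Polynomial.X_ne_zero K'.charpoly_monic.ne_zero),
      Polynomial.roots_X, Multiset.singleton_add]
  have hK'roots : K'.charpoly.roots = Finset.univ.val.map (fun i => ((μ i : ℝ) : ℂ)) :=
    SSaux.roots_charpoly_hermitian hK'psd.isHermitian
  have hLHS : (X.charpoly.roots).map Complex.re = 0 ::ₘ (B'.charpoly.roots.map Complex.re) := by
    rw [hXroots, Multiset.map_cons, Complex.zero_re]
  have hRHS : (H.charpoly.roots).map Complex.re = 0 ::ₘ (Finset.univ.val.map μ) := by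
    rw [hHroots, hK'roots, Multiset.map_cons, Complex.zero_re, Multiset.map_map]
    congr 1
  rw [ge_iff_le, hLHS, hRHS]
  refine le_trans (SSaux.secondSmallest_le (c := c) ?_) (SSaux.le_secondSmallest (c := c) ?_ ?_)
  · rw [Multiset.filter_cons, if_pos hc0]
    have hcm : c ∈ Multiset.filter (fun x => x ≤ c) (Finset.univ.val.map μ) :=
      Multiset.mem_filter.mpr ⟨Multiset.mem_map.mpr ⟨k0, by simp, rfl⟩, le_refl c⟩
    have hpos := Multiset.card_pos_iff_exists_mem.mpr ⟨c, hcm⟩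
    rw [Multiset.card_add, Multiset.card_singleton]
    omega
  · rw [Multiset.card_cons, Multiset.card_map]
    have hcard : B'.charpoly.roots.card = m := by
      rw [Polynomial.splits_iff_card_roots.mp (IsAlgClosed.splits B'.charpoly)]
      · simp
    omega
  · rw [Multiset.filter_cons]
    have hnil : Multiset.filter (fun x => x < c) (B'.charpoly.roots.map Complex.re) = 0 :=
      Multiset.filter_eq_nil.mpr (fun a ha => by
        obtain ⟨ρ, hρ, rfl⟩ := Multiset.mem_map.mp ha
        exact not_lt.mpr (hbend ρ hρ))
    rw [hnil, add_zero]
    split_ifs <;> simp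
end
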